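/- arXiv:1907.02281 — 3 statements merged into one kernel-verified Lean document; each statement's English description precedes it below -/
import Mathlib

section
/- Let $D > 2s > 0$ and let $G : [0,\infty) \to [0,\infty)$ be a non-increasing function. Then $\frac{D}{D-2s} \int_0^\infty t^{2s/(D-2s)} G(t)\, dt \le \left( \int_0^\infty G(t)^{(D-2s)/D} dt \right)^{D/(D-2s)}$. -/
open MeasureTheory Set ENNReal Filter Topology

lemma aux_claim (ν : Measure ℝ) [IsFiniteMeasure ν] (hν0 : ∀ t ≤ (0:ℝ), ν (Iio t) = 0)
    (y : ℝ) :
    ν {t | ENNReal.ofReal y < ν (Iio t)} ≤ ν Set.univ - ENNReal.ofReal y := by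
  set S := {t : ℝ | ENNReal.ofReal y < ν (Iio t)} with hS
  rcases eq_empty_or_nonempty S with h | hne
  · simp [h]
  have hup : ∀ ⦃t u : ℝ⦄, t ∈ S → t ≤ u → u ∈ S := fun t u ht htu =>
    lt_of_lt_of_le ht (measure_mono (Iio_subset_Iio htu))
  have hbdd : BddBelow S := by
    refine ⟨0, fun t ht => ?_⟩
    by_contra hlt
    push_neg at hlt
    rw [hS, mem_setOf_eq, hν0 t hlt.le] at ht
    exact (not_lt_of_ge zero_le) ht
  set t₀ := sInf S with ht₀def
  have key : ν S + ENNReal.ofReal y ≤ ν Set.univ := by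
    by_cases ht₀ : t₀ ∈ S
    · have hsub : S ⊆ Ici t₀ := fun u hu => csInf_le hbdd hu
      calc ν S + ENNReal.ofReal y ≤ ν (Ici t₀) + ν (Iio t₀) :=
            add_le_add (measure_mono hsub) ht₀.le
        _ = ν (Iio t₀) + ν (Iio t₀)ᶜ := by rw [compl_Iio, add_comm]
        _ = ν Set.univ := measure_add_measure_compl measurableSet_Iio
    · have hsub : S ⊆ Ioi t₀ := by
        intro u hu
        rcases lt_or_eq_of_le (csInf_le hbdd hu) with h | h
        · exact h
        · rw [← h] at hu; exact absurd hu ht₀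
      have hyle : ENNReal.ofReal y ≤ ν (Iic t₀) := by
        have hseq : Tendsto (fun n : ℕ => ν (Iio (t₀ + 1 / (n + 1)))) atTop
            (𝓝 (ν (⋂ n : ℕ, Iio (t₀ + 1 / (n + 1))))) := by
          apply tendsto_measure_iInter_atTop
            (fun n => measurableSet_Iio.nullMeasurableSet)
          · intro n m hnm
            apply Iio_subset_Iio
            have : (1 : ℝ) / (m + 1) ≤ 1 / (n + 1) := by
              apply one_div_le_one_div_of_le (by positivity)
              exact_mod_cast by omega
            linarith
          · exact ⟨0, measure_ne_top ν _⟩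
        have hiInter : (⋂ n : ℕ, Iio (t₀ + 1 / (n + 1))) = Iic t₀ := by
          ext x
          simp only [mem_iInter, mem_Iio, mem_Iic]
          constructor
          · intro h
            by_contra hx
            push_neg at hx
            obtain ⟨n, hn⟩ := exists_nat_one_div_lt (by linarith : (0:ℝ) < x - t₀)
            have := h n
            linarith
          · intro h n
            have : (0:ℝ) < 1 / (n + 1) := by positivity
            linarith
        rw [hiInter] at hseq
        apply ge_of_tendsto hseq
        filter_upwards with n
        have hlt : t₀ < t₀ + 1 / (n + 1) := by
          have : (0:ℝ) < 1 / (n + 1) := by positivity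
          linarith
        obtain ⟨u, hu, hu'⟩ := exists_lt_of_csInf_lt hne hlt
        exact le_trans hu.le (measure_mono (Iio_subset_Iio hu'.le))
      calc ν S + ENNReal.ofReal y ≤ ν (Ioi t₀) + ν (Iic t₀) :=
            add_le_add (measure_mono hsub) hyle
        _ = ν (Iic t₀) + ν (Iic t₀)ᶜ := by rw [compl_Iic, add_comm]
        _ = ν Set.univ := measure_add_measure_compl measurableSet_Iic
  exact ENNReal.le_sub_of_add_le_right ENNReal.ofReal_ne_top key

lemma aux_int (ν : Measure ℝ) [IsFiniteMeasure ν] (hν0 : ∀ t ≤ (0:ℝ), ν (Iio t) = 0)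
    (e : ℝ) (he : 0 < e) :
    ENNReal.ofReal (e + 1) * ∫⁻ t, (ν (Iio t)) ^ e ∂ν ≤ (ν Set.univ) ^ (e + 1) := by
  set A := ν Set.univ with hAdef
  have hA : A ≠ ⊤ := measure_ne_top ν _
  set a := A.toReal with hadef
  have ha : 0 ≤ a := ENNReal.toReal_nonneg
  have hAa : A = ENNReal.ofReal a := (ENNReal.ofReal_toReal hA).symm
  rcases eq_or_lt_of_le ha with ha0 | ha0
  · -- a = 0 : measure is zero
    have hA0 : A = 0 := by rw [hAa, ← ha0]; simp
    have : ν = 0 := Measure.measure_univ_eq_zero.mp hA0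
    simp [this, hA0]
  set f : ℝ → ℝ := fun t => (ν (Iio t)).toReal with hfdef
  have hfmono : Monotone f := fun t u h =>
    ENNReal.toReal_mono (measure_ne_top ν _) (measure_mono (Iio_subset_Iio h))
  have hfmeas : Measurable f := hfmono.measurable
  have h1 : ∀ t, (ν (Iio t)) ^ e = ENNReal.ofReal (f t ^ e) := by
    intro t
    rw [← ENNReal.ofReal_rpow_of_nonneg ENNReal.toReal_nonneg he.le,
      ENNReal.ofReal_toReal (measure_ne_top ν _)]
  have key := lintegral_rpow_eq_lintegral_meas_lt_mul ν
    (ae_of_all ν fun t => ENNReal.toReal_nonneg : 0 ≤ᵐ[ν] f) hfmeas.aemeasurable he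
  -- rewrite the sets
  have hset : ∀ y : ℝ, 0 < y → {t : ℝ | y < f t} = {t : ℝ | ENNReal.ofReal y < ν (Iio t)} := by
    intro y hy
    ext t
    simp only [mem_setOf_eq, hfdef]
    rw [ENNReal.ofReal_lt_iff_lt_toReal hy.le (measure_ne_top ν _)]
  have hbound : ∫⁻ y in Ioi (0:ℝ), ν {t | y < f t} * ENNReal.ofReal (y ^ (e - 1)) ≤
      ENNReal.ofReal (a ^ (e+1) / (e * (e+1))) := by
    have step : ∫⁻ y in Ioi (0:ℝ), ν {t | y < f t} * ENNReal.ofReal (y ^ (e - 1)) ≤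
        ∫⁻ y in Ioi (0:ℝ), ENNReal.ofReal ((a - y) * y ^ (e - 1)) := by
      apply setLIntegral_mono' measurableSet_Ioi
      intro y hy
      rw [hset y hy]
      have h2 := aux_claim ν hν0 y
      calc ν {t | ENNReal.ofReal y < ν (Iio t)} * ENNReal.ofReal (y ^ (e - 1))
          ≤ (A - ENNReal.ofReal y) * ENNReal.ofReal (y ^ (e - 1)) := mul_le_mul_left h2 _
        _ = ENNReal.ofReal ((a - y) * y ^ (e - 1)) := by
            rcases le_or_gt y a with hya | hya
            · rw [ENNReal.ofReal_mul (sub_nonneg.mpr hya), ENNReal.ofReal_sub a hy.le, hAa]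
            · have h0 : A - ENNReal.ofReal y = 0 := by
                rw [hAa]
                exact tsub_eq_zero_of_le (ENNReal.ofReal_le_ofReal hya.le)
              rw [h0, zero_mul, eq_comm, ENNReal.ofReal_eq_zero]
              exact mul_nonpos_of_nonpos_of_nonneg (by linarith) (Real.rpow_nonneg hy.le _)
    have hIoiA : ∫⁻ y in Ioi a, ENNReal.ofReal ((a - y) * y ^ (e - 1)) = 0 := by
      have h0 : ∀ᵐ y ∂(volume.restrict (Ioi a)), ENNReal.ofReal ((a - y) * y ^ (e - 1)) = 0 := by
        filter_upwards [self_mem_ae_restrict measurableSet_Ioi] with y hy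
        rw [ENNReal.ofReal_eq_zero]
        exact mul_nonpos_of_nonpos_of_nonneg (by linarith [mem_Ioi.mp hy])
          (Real.rpow_nonneg (le_trans ha (mem_Ioi.mp hy).le) _)
      rw [lintegral_congr_ae h0, lintegral_zero]
    have hii : IntervalIntegrable (fun y => (a - y) * y ^ (e - 1)) volume 0 a := by
      apply IntervalIntegrable.continuousOn_mul
        (intervalIntegral.intervalIntegrable_rpow' (by linarith))
      exact (continuous_const.sub continuous_id).continuousOn
    have hint : IntegrableOn (fun y => (a - y) * y ^ (e - 1)) (Ioc 0 a) volume := hii.1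
    have hnn : 0 ≤ᵐ[volume.restrict (Ioc 0 a)] fun y => (a - y) * y ^ (e - 1) := by
      filter_upwards [self_mem_ae_restrict measurableSet_Ioc] with y hy
      exact mul_nonneg (by linarith [hy.2]) (Real.rpow_nonneg hy.1.le _)
    have hval : ∫ y in Ioc 0 a, (a - y) * y ^ (e - 1) = a ^ (e+1) / (e * (e+1)) := by
      rw [← intervalIntegral.integral_of_le ha]
      have hcong : EqOn (fun y => (a - y) * y ^ (e - 1))
          (fun y => a * y ^ (e - 1) - y ^ e) (uIcc (0:ℝ) a) := by
        intro y hy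
        rw [uIcc_of_le ha] at hy
        simp only
        rcases eq_or_lt_of_le hy.1 with h0 | h0
        · rw [← h0, Real.zero_rpow he.ne']
          ring
        · rw [sub_mul]
          congr 1
          rw [show e = (e - 1) + 1 by ring, Real.rpow_add_one h0.ne' (e-1)]
          ring_nf
      rw [intervalIntegral.integral_congr hcong,
        intervalIntegral.integral_sub
          ((intervalIntegral.intervalIntegrable_rpow' (by linarith)).const_mul a)
          (intervalIntegral.intervalIntegrable_rpow' (by linarith)),
        intervalIntegral.integral_const_mul,
        integral_rpow (Or.inl (by linarith : (-1:ℝ) < e - 1)),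
        integral_rpow (Or.inl (by linarith : (-1:ℝ) < e)),
        sub_add_cancel, Real.zero_rpow he.ne',
        Real.zero_rpow (by positivity : e + 1 ≠ 0)]
      have hae : a ^ (e + 1) = a ^ e * a := Real.rpow_add_one ha0.ne' e
      rw [hae]
      field_simp
      ring
    calc ∫⁻ y in Ioi (0:ℝ), ν {t | y < f t} * ENNReal.ofReal (y ^ (e - 1))
        ≤ ∫⁻ y in Ioi (0:ℝ), ENNReal.ofReal ((a - y) * y ^ (e - 1)) := step
      _ = (∫⁻ y in Ioc 0 a, ENNReal.ofReal ((a - y) * y ^ (e - 1)))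
          + ∫⁻ y in Ioi a, ENNReal.ofReal ((a - y) * y ^ (e - 1)) := by
            rw [← lintegral_union measurableSet_Ioi (Ioc_disjoint_Ioi le_rfl),
              Ioc_union_Ioi_eq_Ioi ha]
      _ = ∫⁻ y in Ioc 0 a, ENNReal.ofReal ((a - y) * y ^ (e - 1)) := by
            rw [hIoiA, add_zero]
      _ = ENNReal.ofReal (∫ y in Ioc 0 a, (a - y) * y ^ (e - 1)) :=
            (ofReal_integral_eq_lintegral_ofReal hint hnn).symm
      _ ≤ ENNReal.ofReal (a ^ (e+1) / (e * (e+1))) := by rw [hval]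
  calc ENNReal.ofReal (e+1) * ∫⁻ t, (ν (Iio t)) ^ e ∂ν
      = ENNReal.ofReal (e+1) * ∫⁻ t, ENNReal.ofReal (f t ^ e) ∂ν := by simp_rw [h1]
    _ = ENNReal.ofReal (e+1) * (ENNReal.ofReal e *
          ∫⁻ y in Ioi (0:ℝ), ν {t | y < f t} * ENNReal.ofReal (y ^ (e - 1))) := by rw [key]
    _ ≤ ENNReal.ofReal (e+1) * (ENNReal.ofReal e *
          ENNReal.ofReal (a ^ (e+1) / (e * (e+1)))) :=
        mul_le_mul_right (mul_le_mul_right hbound _) _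
    _ = ENNReal.ofReal ((e+1) * (e * (a ^ (e+1) / (e * (e+1))))) := by
        rw [← ENNReal.ofReal_mul he.le, ← ENNReal.ofReal_mul (by positivity : (0:ℝ) ≤ e + 1)]
    _ = ENNReal.ofReal (a ^ (e+1)) := by
        congr 1
        field_simp
    _ = A ^ (e+1) := by
        rw [hAa, ENNReal.ofReal_rpow_of_nonneg ha (by linarith : (0:ℝ) ≤ e + 1)]

/-- For `D > 2s > 0` and a non-increasing function `G : [0,∞) → [0,∞)`,
`(D/(D-2s)) ∫₀^∞ t^(2s/(D-2s)) G(t) dt ≤ (∫₀^∞ G(t)^((D-2s)/D) dt)^(D/(D-2s))`. -/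
theorem stmt0 (D s : ℝ) (hs : 0 < 2 * s) (hD : 2 * s < D)
    (G : ℝ → ℝ) (hGmeas : Measurable G)
    (hGnonneg : ∀ t, 0 ≤ t → 0 ≤ G t)
    (hGanti : AntitoneOn G (Set.Ici 0)) :
    ENNReal.ofReal (D / (D - 2 * s)) *
        ∫⁻ t in Set.Ioi (0 : ℝ), ENNReal.ofReal (t ^ (2 * s / (D - 2 * s)) * G t) ≤
      (∫⁻ t in Set.Ioi (0 : ℝ), ENNReal.ofReal (G t ^ ((D - 2 * s) / D))) ^ (D / (D - 2 * s)) := by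
  have hD0 : 0 < D := lt_trans hs hD
  have hds : 0 < D - 2 * s := by linarith
  set qq := (D - 2*s)/D with hqq
  set ee := 2*s/(D - 2*s) with hee
  have he : 0 < ee := div_pos hs hds
  have hq : 0 < qq := div_pos hds hD0
  have hqe : qq * (ee + 1) = 1 := by
    rw [hqq, hee]; field_simp; ring
  have hpe : D / (D - 2*s) = ee + 1 := by
    rw [hee]; field_simp; ring
  rw [hpe]
  set g : ℝ → ℝ≥0∞ := fun t => ENNReal.ofReal (G t ^ qq) with hgdef
  have hgmeas : Measurable g := (hGmeas.pow measurable_const).ennreal_ofReal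
  set A := ∫⁻ t in Ioi (0:ℝ), g t with hAdef
  by_cases hAtop : A = ⊤
  · rw [hAtop, ENNReal.top_rpow_of_pos (by linarith : (0:ℝ) < ee + 1)]
    exact le_top
  set ν := (volume.restrict (Ioi (0:ℝ))).withDensity g with hνdef
  have hνIio : ∀ t, ν (Iio t) = ∫⁻ u in Ioo 0 t, g u := by
    intro t
    rw [hνdef, withDensity_apply _ measurableSet_Iio,
      Measure.restrict_restrict measurableSet_Iio, inter_comm, Ioi_inter_Iio]
  have hνuniv : ν Set.univ = A := by
    rw [hνdef, withDensity_apply _ MeasurableSet.univ, Measure.restrict_univ, hAdef]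
  haveI hνfin : IsFiniteMeasure ν := ⟨by rw [hνuniv]; exact lt_top_iff_ne_top.mpr hAtop⟩
  have hν0 : ∀ t ≤ (0:ℝ), ν (Iio t) = 0 := by
    intro t ht
    rw [hνIio, Ioo_eq_empty (not_lt.mpr ht)]
    simp
  have hmono : Monotone fun t => ν (Iio t) := fun t u h => measure_mono (Iio_subset_Iio h)
  have hmono' : Monotone fun t => (ν (Iio t)) ^ ee := fun t u h =>
    ENNReal.rpow_le_rpow (hmono h) he.le
  have step1 : ∫⁻ t in Ioi (0:ℝ), ENNReal.ofReal (t ^ ee * G t) ≤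
      ∫⁻ t in Ioi (0:ℝ), (ν (Iio t)) ^ ee * g t := by
    apply setLIntegral_mono' measurableSet_Ioi
    intro t ht
    have ht0 : (0:ℝ) < t := ht
    rcases eq_or_lt_of_le (hGnonneg t ht0.le) with hG0 | hGpos
    · rw [← hG0, mul_zero, ENNReal.ofReal_zero]; exact zero_le
    · have hb1 : ENNReal.ofReal (G t ^ qq * t) ≤ ν (Iio t) := by
        rw [hνIio]
        calc ENNReal.ofReal (G t ^ qq * t)
            = ENNReal.ofReal (G t ^ qq) * ENNReal.ofReal t :=
              ENNReal.ofReal_mul (Real.rpow_nonneg hGpos.le _)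
          _ = ENNReal.ofReal (G t ^ qq) * volume (Ioo (0:ℝ) t) := by
              rw [Real.volume_Ioo, sub_zero]
          _ = ∫⁻ _ in Ioo (0:ℝ) t, ENNReal.ofReal (G t ^ qq) := (setLIntegral_const _ _).symm
          _ ≤ ∫⁻ u in Ioo (0:ℝ) t, g u := by
              apply setLIntegral_mono' measurableSet_Ioo
              intro u hu
              apply ENNReal.ofReal_le_ofReal
              exact Real.rpow_le_rpow (hGnonneg t ht0.le)
                (hGanti (le_of_lt hu.1 : u ∈ Ici (0:ℝ)) (le_of_lt ht0 : t ∈ Ici (0:ℝ)) hu.2.le)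
                hq.le
      have h1 : (G t ^ qq * t) ^ ee = (G t ^ qq) ^ ee * t ^ ee :=
        Real.mul_rpow (Real.rpow_nonneg hGpos.le _) ht0.le
      have h2 : (G t ^ qq) ^ ee = G t ^ (qq * ee) := (Real.rpow_mul hGpos.le qq ee).symm
      have h3 : G t ^ (qq * ee) * G t ^ qq = G t ^ (qq * ee + qq) :=
        (Real.rpow_add hGpos (qq*ee) qq).symm
      have h4 : qq * ee + qq = 1 := by rw [← hqe]; ring
      have hkey : (G t ^ qq * t) ^ ee * G t ^ qq = t ^ ee * G t := by
        rw [h1, h2, mul_comm (G t ^ (qq*ee)) (t^ee), mul_assoc, h3, h4, Real.rpow_one]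
      calc ENNReal.ofReal (t ^ ee * G t)
          = ENNReal.ofReal ((G t ^ qq * t) ^ ee) * g t := by
            rw [hgdef, ← ENNReal.ofReal_mul
              (Real.rpow_nonneg (mul_nonneg (Real.rpow_nonneg hGpos.le _) ht0.le) _), hkey]
        _ ≤ (ν (Iio t)) ^ ee * g t := by
            apply mul_le_mul_left
            rw [← ENNReal.ofReal_rpow_of_nonneg
              (mul_nonneg (Real.rpow_nonneg hGpos.le _) ht0.le) he.le]
            exact ENNReal.rpow_le_rpow hb1 he.le
  have step2 : ∫⁻ t in Ioi (0:ℝ), (ν (Iio t)) ^ ee * g t = ∫⁻ t, (ν (Iio t)) ^ ee ∂ν := by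
    rw [hνdef, lintegral_withDensity_eq_lintegral_mul _ hgmeas hmono'.measurable]
    exact lintegral_congr fun t => (mul_comm _ _)
  calc ENNReal.ofReal (ee + 1) * ∫⁻ t in Ioi (0:ℝ), ENNReal.ofReal (t ^ ee * G t)
      ≤ ENNReal.ofReal (ee + 1) * ∫⁻ t, (ν (Iio t)) ^ ee ∂ν := by
        rw [← step2]; exact mul_le_mul_right step1 _
    _ ≤ (ν Set.univ) ^ (ee + 1) := aux_int ν hν0 ee he
    _ = A ^ (ee + 1) := by rw [hνuniv]
end

section
/- Let $m \ge 0$, $a > 0$, $b > 0$, $D > 0$ and $0 < s < D/2$. Suppose that for every $t > 0$ one has $m \le a\, t^s + b\, m^2\, t^{-D/2}$. Then there exists a constant $c > 0$, depending only on $s$, $D$ and $b$, such that $a \ge c\, m^{(D-2s)/D}$. -/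
/-- If `m ≤ a t^s + b m² t^{-D/2}` for all `t > 0`, with `0 < 2s < D`,
`a, b > 0`, `m ≥ 0`, then `a ≥ c m^{(D-2s)/D}` for a constant `c = c(s,D,b) > 0`. -/
theorem stmt9 (s D b : ℝ) (hs : 0 < s) (hsD : 2 * s < D) (hb : 0 < b) :
    ∃ c : ℝ, 0 < c ∧ ∀ m a : ℝ, 0 ≤ m → 0 < a →
      (∀ t : ℝ, 0 < t → m ≤ a * t ^ s + b * m ^ 2 * t ^ (-(D / 2))) →
      c * m ^ ((D - 2 * s) / D) ≤ a := by
  have hD : 0 < D := lt_trans (by linarith) hsD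
  refine ⟨(1/2) * (2*b) ^ (-(2*s/D)), by positivity, ?_⟩
  intro m a hm ha hineq
  rcases eq_or_lt_of_le hm with hm0 | hm0
  · rw [← hm0, Real.zero_rpow (div_ne_zero (by linarith) hD.ne'), mul_zero]
    exact ha.le
  · set t : ℝ := (2*b*m) ^ (2/D) with ht
    have hbm : (0:ℝ) < 2*b*m := by positivity
    have htpos : 0 < t := Real.rpow_pos_of_pos hbm _
    have h1 := hineq t htpos
    have hts : t ^ s = (2*b*m) ^ (2*s/D) := by
      rw [ht, ← Real.rpow_mul hbm.le]
      congr 1; field_simp; try ring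
    have htD : t ^ (-(D/2)) = (2*b*m)⁻¹ := by
      rw [ht, ← Real.rpow_mul hbm.le,
        show 2/D * -(D/2) = -1 by field_simp; try ring, Real.rpow_neg_one]
    have h2 : b * m^2 * t ^ (-(D/2)) = m / 2 := by
      rw [htD]; field_simp
    rw [hts, h2] at h1
    have h3 : m/2 ≤ a * (2*b*m) ^ (2*s/D) := by linarith
    have hkey : (1/2) * (2*b) ^ (-(2*s/D)) * m ^ ((D - 2*s)/D)
        = (m/2) * ((2*b*m) ^ (2*s/D))⁻¹ := by
      rw [Real.mul_rpow (by positivity) hm, mul_inv,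
        show (D - 2*s)/D = 1 + -(2*s/D) by field_simp; ring,
        Real.rpow_add hm0, Real.rpow_one,
        Real.rpow_neg (by positivity : (0:ℝ) ≤ 2*b), Real.rpow_neg hm]
      ring
    rw [hkey, ← div_eq_mul_inv, div_le_iff₀ (by positivity)]
    linarith
end

section
/- Under the hypotheses (a)-(d) of the previous kernel setup (stochastic normalization in $Y$, mass $e^{-t\beta}$ in $X$ with $\beta\ge 0$, Chapman-Kolmogorov, and $\int p(X,Y,t)^2 dX = a_N e^{-t\beta}/V(t)$), for every measurable $E\subset\mathbb{R}^N$ with $|E|<\infty$ and every $t>0$ one has $\|P_t\mathbf{1}_E - \mathbf{1}_E\|_{L^1} \ge |E| - \frac{2a_N}{V(t/2)} e^{-\frac{t}{4}\beta}\, |E|^2$. -/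
open MeasureTheory Set
open scoped ENNReal

lemma key_scalar (m c A v : ℝ) (hm : 0 ≤ m) (hA0 : 0 < A) (hA1 : A ≤ 1)
    (hv2 : v ^ 2 = c * A ^ 2 * m) :
    v * A ^ 2 * m ≤ c * A * m ^ 2 + A ^ 4 * m / 2 := by
  have h65 : A ^ 6 ≤ A ^ 5 := pow_le_pow_of_le_one hA0.le hA1 (by norm_num)
  rw [← mul_le_mul_iff_right₀ hA0]
  nlinarith [mul_nonneg hm (sq_nonneg (v - A ^ 3)), mul_nonneg hm (sub_nonneg.2 h65)]


/-- STATEMENT 14: Under the kernel hypotheses (stochastic normalization in `Y`, mass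
`e^{-tβ}` in `X` with `β ≥ 0`, Chapman–Kolmogorov, and `∫ p(X,Y,t)² dX = a_N e^{-tβ}/V(t)`),
for every measurable `E` of finite measure and every `t > 0`,
`‖P_t 1_E - 1_E‖_{L¹} ≥ |E| - (2a_N / V(t/2)) e^{-tβ/4} |E|²`. -/
theorem stmt15 (N : ℕ) (p : EuclideanSpace ℝ (Fin N) → EuclideanSpace ℝ (Fin N) → ℝ → ℝ)
    (β aN : ℝ) (hβ : 0 ≤ β) (haN : 0 < aN) (V : ℝ → ℝ) (hV : ∀ t : ℝ, 0 < t → 0 < V t)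
    (hpmeas : ∀ t : ℝ, 0 < t →
      Measurable (fun q : EuclideanSpace ℝ (Fin N) × EuclideanSpace ℝ (Fin N) => p q.1 q.2 t))
    (hppos : ∀ X Y : EuclideanSpace ℝ (Fin N), ∀ t : ℝ, 0 < t → 0 < p X Y t)
    (hmass : ∀ (X : EuclideanSpace ℝ (Fin N)) (t : ℝ), 0 < t → ∫ Y, p X Y t = 1)
    (hmass' : ∀ (Y : EuclideanSpace ℝ (Fin N)) (t : ℝ), 0 < t →
      ∫ X, p X Y t = Real.exp (-t * β))
    (hck : ∀ (X Y : EuclideanSpace ℝ (Fin N)) (t s : ℝ), 0 < t → 0 < s →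
      p X Y (t + s) = ∫ Z, p X Z t * p Z Y s)
    (hL2 : ∀ (Y : EuclideanSpace ℝ (Fin N)) (t : ℝ), 0 < t →
      ∫ X, (p X Y t) ^ 2 = aN * Real.exp (-t * β) / V t)
    (E : Set (EuclideanSpace ℝ (Fin N))) (hE : MeasurableSet E) (hEfin : volume E < ⊤)
    (t : ℝ) (ht : 0 < t) :
    (volume E).toReal - 2 * aN / V (t / 2) * Real.exp (-(t / 4) * β) * (volume E).toReal ^ 2 ≤
      ∫ X, |(∫ Y in E, p X Y t) - E.indicator (fun _ => (1 : ℝ)) X| := by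
  classical
  have h2 : (0:ℝ) < t / 2 := by linarith
  have hA0 : 0 < Real.exp (-(t / 4) * β) := Real.exp_pos _
  have hA1 : Real.exp (-(t / 4) * β) ≤ 1 := Real.exp_le_one_iff.mpr (by nlinarith)
  have hA2 : Real.exp (-(t / 2) * β) = Real.exp (-(t / 4) * β) ^ 2 := by
    rw [← Real.exp_nat_mul]; congr 1; push_cast; ring
  have hA4 : Real.exp (-t * β) = Real.exp (-(t / 4) * β) ^ 4 := by
    rw [← Real.exp_nat_mul]; congr 1; push_cast; ring
  -- measurability of sections
  have hsec1 : ∀ (s : ℝ), 0 < s → ∀ X, Measurable fun Y => p X Y s := fun s hs X =>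
    (hpmeas s hs).comp (measurable_const.prodMk measurable_id)
  have hsec2 : ∀ (s : ℝ), 0 < s → ∀ Y, Measurable fun X => p X Y s := fun s hs Y =>
    (hpmeas s hs).comp (measurable_id.prodMk measurable_const)
  have hqmeas : ∀ (s : ℝ), 0 < s →
      Measurable (fun q : EuclideanSpace ℝ (Fin N) × EuclideanSpace ℝ (Fin N) =>
        ENNReal.ofReal (p q.1 q.2 s)) := fun s hs =>
    ENNReal.measurable_ofReal.comp (hpmeas s hs)
  -- integrability facts
  have hint_mass : ∀ X (s : ℝ), 0 < s → Integrable (fun Y => p X Y s) := by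
    intro X s hs
    by_contra hni
    have h0 := integral_undef hni
    rw [hmass X s hs] at h0
    exact one_ne_zero h0
  have hint_mass' : ∀ Y (s : ℝ), 0 < s → Integrable (fun X => p X Y s) := by
    intro Y s hs
    by_contra hni
    have h0 := integral_undef hni
    rw [hmass' Y s hs] at h0
    exact (Real.exp_pos _).ne' h0
  have hint_L2 : ∀ Y (s : ℝ), 0 < s → Integrable (fun X => (p X Y s) ^ 2) := by
    intro Y s hs
    by_contra hni
    have h0 := integral_undef hni
    rw [hL2 Y s hs] at h0
    exact (ne_of_gt (div_pos (mul_pos haN (Real.exp_pos _)) (hV s hs))) h0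
  -- lintegral versions
  have lmass : ∀ X (s : ℝ), 0 < s → ∫⁻ Y, ENNReal.ofReal (p X Y s) = 1 := by
    intro X s hs
    rw [← ofReal_integral_eq_lintegral_ofReal (hint_mass X s hs)
      (ae_of_all _ fun Y => (hppos X Y s hs).le), hmass X s hs, ENNReal.ofReal_one]
  have lmass' : ∀ Y (s : ℝ), 0 < s →
      ∫⁻ X, ENNReal.ofReal (p X Y s) = ENNReal.ofReal (Real.exp (-s * β)) := by
    intro Y s hs
    rw [← ofReal_integral_eq_lintegral_ofReal (hint_mass' Y s hs)
      (ae_of_all _ fun X => (hppos X Y s hs).le), hmass' Y s hs]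
  have lL2 : ∀ Y (s : ℝ), 0 < s →
      ∫⁻ X, (ENNReal.ofReal (p X Y s)) ^ 2
        = ENNReal.ofReal (aN * Real.exp (-s * β) / V s) := by
    intro Y s hs
    have h1 : ∀ X, (ENNReal.ofReal (p X Y s)) ^ 2 = ENNReal.ofReal ((p X Y s) ^ 2) := fun X =>
      (ENNReal.ofReal_pow (hppos X Y s hs).le 2).symm
    simp_rw [h1]
    rw [← ofReal_integral_eq_lintegral_ofReal (hint_L2 Y s hs)
      (ae_of_all _ fun X => sq_nonneg _), hL2 Y s hs]
  -- Chapman-Kolmogorov in lintegral form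
  have lck : ∀ X Y, ENNReal.ofReal (p X Y t)
      = ∫⁻ Z, ENNReal.ofReal (p X Z (t / 2)) * ENNReal.ofReal (p Z Y (t / 2)) := by
    intro X Y
    have hck' := hck X Y (t / 2) (t / 2) h2 h2
    rw [show t / 2 + t / 2 = t by ring] at hck'
    have hint_ck : Integrable (fun Z => p X Z (t / 2) * p Z Y (t / 2)) := by
      by_contra hni
      have h0 := integral_undef hni
      rw [← hck'] at h0
      exact (hppos X Y t ht).ne' h0
    rw [hck', ofReal_integral_eq_lintegral_ofReal hint_ck
      (ae_of_all _ fun Z => mul_nonneg (hppos _ _ _ h2).le (hppos _ _ _ h2).le)]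
    congr 1
    funext Z
    exact ENNReal.ofReal_mul (hppos _ _ _ h2).le
  -- swapped full×E lintegral
  have hswapE : ∀ (s : ℝ), 0 < s →
      (∫⁻ X, ∫⁻ Y in E, ENNReal.ofReal (p X Y s))
        = ENNReal.ofReal (Real.exp (-s * β)) * volume E := by
    intro s hs
    rw [lintegral_lintegral_swap ((hqmeas s hs).aemeasurable)]
    rw [lintegral_congr fun Y => lmass' Y s hs, setLIntegral_const]
  have hGmeas : Measurable fun Z => ∫⁻ Y in E, ENNReal.ofReal (p Z Y (t / 2)) :=
    (hqmeas _ h2).lintegral_prod_right'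
  have hFmeas : Measurable fun Z => ∫⁻ X in E, ENNReal.ofReal (p X Z (t / 2)) :=
    ((hqmeas _ h2).comp measurable_swap).lintegral_prod_right'
  have hIrepr : (∫⁻ X in E, ∫⁻ Y in E, ENNReal.ofReal (p X Y t))
      = ∫⁻ Z, (∫⁻ X in E, ENNReal.ofReal (p X Z (t / 2)))
          * (∫⁻ Y in E, ENNReal.ofReal (p Z Y (t / 2))) := by
    calc (∫⁻ X in E, ∫⁻ Y in E, ENNReal.ofReal (p X Y t))
        = ∫⁻ X in E, ∫⁻ Y in E, ∫⁻ Z, ENNReal.ofReal (p X Z (t / 2))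
            * ENNReal.ofReal (p Z Y (t / 2)) :=
          lintegral_congr fun X => lintegral_congr fun Y => lck X Y
      _ = ∫⁻ X in E, ∫⁻ Z, ∫⁻ Y in E, ENNReal.ofReal (p X Z (t / 2))
            * ENNReal.ofReal (p Z Y (t / 2)) := by
          refine lintegral_congr fun X => ?_
          exact lintegral_lintegral_swap
            ((((hsec1 _ h2 X).comp measurable_snd).ennreal_ofReal.mul
              ((hqmeas _ h2).comp measurable_swap)).aemeasurable)
      _ = ∫⁻ X in E, ∫⁻ Z, ENNReal.ofReal (p X Z (t / 2))
            * ∫⁻ Y in E, ENNReal.ofReal (p Z Y (t / 2)) := by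
          refine lintegral_congr fun X => lintegral_congr fun Z => ?_
          rw [lintegral_const_mul _ ((hsec1 _ h2 Z).ennreal_ofReal)]
      _ = ∫⁻ Z, ∫⁻ X in E, ENNReal.ofReal (p X Z (t / 2))
            * ∫⁻ Y in E, ENNReal.ofReal (p Z Y (t / 2)) :=
          lintegral_lintegral_swap
            (((hqmeas _ h2).mul (hGmeas.comp measurable_snd)).aemeasurable)
      _ = _ := lintegral_congr fun Z =>
          lintegral_mul_const _ ((hsec2 _ h2 Z).ennreal_ofReal)
  have hC0 : (0:ℝ) ≤ aN * Real.exp (-(t / 2) * β) / V (t / 2) :=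
    (div_pos (mul_pos haN (Real.exp_pos _)) (hV _ h2)).le
  have hFle : ∀ Z, (∫⁻ X in E, ENNReal.ofReal (p X Z (t / 2)))
      ≤ (ENNReal.ofReal (aN * Real.exp (-(t / 2) * β) / V (t / 2))) ^ (1/2:ℝ)
        * (volume E) ^ (1/2:ℝ) := by
    intro Z
    have hconj : (2:ℝ).HolderConjugate 2 := Real.HolderConjugate.two_two
    have hH := ENNReal.lintegral_mul_le_Lp_mul_Lq (volume.restrict E) hconj
      (f := fun X => ENNReal.ofReal (p X Z (t / 2))) (g := fun _ => (1:ℝ≥0∞))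
      ((hsec2 _ h2 Z).ennreal_ofReal.aemeasurable) aemeasurable_const
    simp only [Pi.mul_apply, mul_one, ENNReal.one_rpow] at hH
    have hpow : ∀ x : ℝ≥0∞, x ^ (2:ℝ) = x ^ (2:ℕ) := fun x => by
      rw [← ENNReal.rpow_natCast]; norm_num
    rw [lintegral_one, Measure.restrict_apply_univ] at hH
    refine le_trans hH ?_
    gcongr
    simp_rw [hpow]
    calc (∫⁻ X in E, ENNReal.ofReal (p X Z (t / 2)) ^ (2:ℕ))
        ≤ ∫⁻ X, ENNReal.ofReal (p X Z (t / 2)) ^ (2:ℕ) :=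
          setLIntegral_le_lintegral _ _
      _ = ENNReal.ofReal (aN * Real.exp (-(t / 2) * β) / V (t / 2)) := lL2 Z _ h2
  have hIle : (∫⁻ X in E, ∫⁻ Y in E, ENNReal.ofReal (p X Y t))
      ≤ (ENNReal.ofReal (aN * Real.exp (-(t / 2) * β) / V (t / 2))) ^ (1/2:ℝ)
        * (volume E) ^ (1/2:ℝ)
        * (ENNReal.ofReal (Real.exp (-(t / 2) * β)) * volume E) := by
    rw [hIrepr]
    calc (∫⁻ Z, (∫⁻ X in E, ENNReal.ofReal (p X Z (t / 2)))
          * (∫⁻ Y in E, ENNReal.ofReal (p Z Y (t / 2))))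
        ≤ ∫⁻ Z, ((ENNReal.ofReal (aN * Real.exp (-(t / 2) * β) / V (t / 2))) ^ (1/2:ℝ)
            * (volume E) ^ (1/2:ℝ))
            * (∫⁻ Y in E, ENNReal.ofReal (p Z Y (t / 2))) :=
          lintegral_mono fun Z => mul_le_mul_left (hFle Z) _
      _ = ((ENNReal.ofReal (aN * Real.exp (-(t / 2) * β) / V (t / 2))) ^ (1/2:ℝ)
            * (volume E) ^ (1/2:ℝ)) * ∫⁻ Z, ∫⁻ Y in E, ENNReal.ofReal (p Z Y (t / 2)) :=
          lintegral_const_mul _ hGmeas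
      _ = _ := by rw [hswapE _ h2]
  -- real-valued heat semigroup applied to the indicator
  have hΦmeas : Measurable fun X => ∫⁻ Y in E, ENNReal.ofReal (p X Y t) :=
    (hqmeas t ht).lintegral_prod_right'
  have hΦle1 : ∀ X, (∫⁻ Y in E, ENNReal.ofReal (p X Y t)) ≤ 1 := fun X =>
    le_trans (setLIntegral_le_lintegral _ _) (le_of_eq (lmass X t ht))
  have hΦne : ∀ X, (∫⁻ Y in E, ENNReal.ofReal (p X Y t)) ≠ ⊤ := fun X =>
    ne_top_of_le_ne_top ENNReal.one_ne_top (hΦle1 X)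
  set φ : EuclideanSpace ℝ (Fin N) → ℝ :=
    fun X => (∫⁻ Y in E, ENNReal.ofReal (p X Y t)).toReal with hφdef
  have hφ_eq : ∀ X, (∫ Y in E, p X Y t) = φ X := by
    intro X
    rw [integral_eq_lintegral_of_nonneg_ae (ae_of_all _ fun Y => (hppos X Y t ht).le)
      ((hsec1 t ht X).aestronglyMeasurable)]
  have hφmeas : Measurable φ := hΦmeas.ennreal_toReal
  have hφnn : ∀ X, 0 ≤ φ X := fun X => ENNReal.toReal_nonneg
  have hφ1 : ∀ X, φ X ≤ 1 := fun X => by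
    have := ENNReal.toReal_mono ENNReal.one_ne_top (hΦle1 X)
    simpa using this
  have hφofReal : ∀ X, ENNReal.ofReal (φ X) = ∫⁻ Y in E, ENNReal.ofReal (p X Y t) := fun X =>
    ENNReal.ofReal_toReal (hΦne X)
  have hlintφ : ∫⁻ X, ENNReal.ofReal (φ X) = ENNReal.ofReal (Real.exp (-t * β)) * volume E := by
    simp_rw [hφofReal]; exact hswapE t ht
  have hφint : Integrable φ := by
    constructor
    · exact hφmeas.aestronglyMeasurable
    · rw [hasFiniteIntegral_iff_ofReal (ae_of_all _ hφnn), hlintφ]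
      exact ENNReal.mul_lt_top ENNReal.ofReal_lt_top hEfin
  have hintφ_val : ∫ X, φ X = Real.exp (-t * β) * (volume E).toReal := by
    rw [integral_eq_lintegral_of_nonneg_ae (ae_of_all _ hφnn) hφmeas.aestronglyMeasurable,
      hlintφ, ENNReal.toReal_mul, ENNReal.toReal_ofReal (Real.exp_pos _).le]
  have hintEφ_val : ∫ X in E, φ X
      = (∫⁻ X in E, ∫⁻ Y in E, ENNReal.ofReal (p X Y t)).toReal := by
    rw [integral_eq_lintegral_of_nonneg_ae (ae_of_all _ hφnn) hφmeas.aestronglyMeasurable]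
    congr 1
    exact lintegral_congr fun X => hφofReal X
  -- pointwise identity for the absolute value
  have habs : ∀ X, |φ X - E.indicator (fun _ => (1:ℝ)) X|
      = E.indicator (fun _ => (1:ℝ)) X + φ X - 2 * E.indicator φ X := by
    intro X
    by_cases hX : X ∈ E
    · rw [indicator_of_mem hX, indicator_of_mem hX, abs_of_nonpos (by linarith [hφ1 X])]
      ring
    · rw [indicator_of_notMem hX, indicator_of_notMem hX, sub_zero, abs_of_nonneg (hφnn X)]
      ring
  have hind1 : Integrable (E.indicator fun _ => (1:ℝ)) := by
    rw [integrable_indicator_iff hE]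
    exact integrableOn_const hEfin.ne
  have hindφ : Integrable (E.indicator φ) := hφint.indicator hE
  have hintabs : ∫ X, |φ X - E.indicator (fun _ => (1:ℝ)) X|
      = (volume E).toReal + Real.exp (-t * β) * (volume E).toReal
        - 2 * (∫⁻ X in E, ∫⁻ Y in E, ENNReal.ofReal (p X Y t)).toReal := by
    simp_rw [habs]
    rw [integral_sub (f := fun X => E.indicator (fun _ => (1:ℝ)) X + φ X)
        (g := fun X => 2 * E.indicator φ X) (hind1.add hφint) (hindφ.const_mul 2),
      integral_add (f := fun X => E.indicator (fun _ => (1:ℝ)) X) (g := φ) hind1 hφint,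
      integral_const_mul, integral_indicator hE, integral_indicator hE, hintφ_val, hintEφ_val]
    simp [setIntegral_const, measureReal_def]
  -- assemble
  simp_rw [hφ_eq]
  rw [hintabs, hA4]
  have hRne : (ENNReal.ofReal (aN * Real.exp (-(t / 2) * β) / V (t / 2))) ^ (1/2:ℝ)
      * (volume E) ^ (1/2:ℝ) * (ENNReal.ofReal (Real.exp (-(t / 2) * β)) * volume E) ≠ ⊤ := by
    apply ENNReal.mul_ne_top
    apply ENNReal.mul_ne_top
    · exact ENNReal.rpow_ne_top_of_nonneg (by norm_num) ENNReal.ofReal_ne_top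
    · exact ENNReal.rpow_ne_top_of_nonneg (by norm_num) hEfin.ne
    · exact ENNReal.mul_ne_top ENNReal.ofReal_ne_top hEfin.ne
  have hIreal := ENNReal.toReal_mono hRne hIle
  rw [ENNReal.toReal_mul, ENNReal.toReal_mul, ENNReal.toReal_mul,
    ← ENNReal.toReal_rpow, ← ENNReal.toReal_rpow,
    ENNReal.toReal_ofReal hC0, ENNReal.toReal_ofReal (Real.exp_pos _).le] at hIreal
  set v := Real.sqrt (aN * Real.exp (-(t / 2) * β) / V (t / 2) * (volume E).toReal) with hvdef
  have hsqrt : (aN * Real.exp (-(t / 2) * β) / V (t / 2)) ^ (1/2:ℝ)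
      * (volume E).toReal ^ (1/2:ℝ) = v := by
    rw [hvdef, Real.sqrt_mul hC0, Real.sqrt_eq_rpow, Real.sqrt_eq_rpow]
  rw [hsqrt] at hIreal
  have hv2 : v ^ 2 = aN / V (t / 2) * Real.exp (-(t / 4) * β) ^ 2 * (volume E).toReal := by
    rw [hvdef, Real.sq_sqrt (mul_nonneg hC0 ENNReal.toReal_nonneg), hA2]; ring
  have hkey := key_scalar (volume E).toReal (aN / V (t / 2)) (Real.exp (-(t / 4) * β)) v
    ENNReal.toReal_nonneg hA0 hA1 hv2
  rw [hA2] at hIreal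
  ring_nf at hIreal hkey ⊢
  nlinarith [hIreal, hkey]
end
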